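/- Let k ≥ 7 be odd, let G be a graph on n vertices containing no odd cycle of length less than k, and fix a k-cycle v_0v_1…v_{k−1} in G with good sequences D_j = (v_j, v_{j+1}, v_{j+3}, v_{j+2}, v_{j+4}, …, v_{j+k−1}) (indices mod k) for 0 ≤ j ≤ k−1, and set n_{i,j} = |A_i(D_j)|. Then ∑_{j=0}^{k−1} ( n_{1,j}/2 + ∑_{i=2}^{k−1} n_{i,j} ) ≤ n(k−1). -/

import Mathlib

/-- `f` realizes a cycle of length `ℓ` in `G`: an injective map from `ZMod ℓ` whose
consecutive images are adjacent. -/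
def IsCycleMap {V : Type*} (G : SimpleGraph V) {ℓ : ℕ} (f : ZMod ℓ → V) : Prop :=
  Function.Injective f ∧ ∀ i, G.Adj (f i) (f (i + 1))

/-- `G` contains no odd cycle of length less than `k`. -/
def NoShortOddCycle {V : Type*} (G : SimpleGraph V) (k : ℕ) : Prop :=
  ∀ ℓ : ℕ, Odd ℓ → 3 ≤ ℓ → ℓ < k → ∀ f : ZMod ℓ → V, ¬ IsCycleMap G f

/-- The good sequence associated to the cycle `f = (v_0, v_1, …, v_{k-1})`:
the entries `v_2` and `v_3` are swapped. -/
def goodOfCycle {V : Type*} {k : ℕ} (f : ZMod k → V) : ZMod k → V :=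
  fun i => if i = 2 then f 3 else if i = 3 then f 2 else f i

/-- `z` is a good sequence in `G`: it arises from some `k`-cycle of `G`
(quantifying over all cycle maps accounts for all `2k` rotations and reflections). -/
def IsGoodSeq {V : Type*} (G : SimpleGraph V) {k : ℕ} (z : ZMod k → V) : Prop :=
  ∃ f : ZMod k → V, IsCycleMap G f ∧ z = goodOfCycle f

/-- The vertex sequence `z₀, z₁, z₃, z₂, z₄, …, z_{i-1}, w` (indices `0, …, i`,
with the final entry `w` at index `i`). -/
def seqAt {V : Type*} {k : ℕ} (z : ZMod k → V) (w : V) (i : ℕ) : ℕ → V :=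
  fun a => if a = i then w else if a = 2 then z 3 else if a = 3 then z 2 else z (a : ZMod k)

/-- `q 0, q 1, …, q i` is an induced path in `G`. -/
def IsInducedPathOn {V : Type*} (G : SimpleGraph V) (q : ℕ → V) (i : ℕ) : Prop :=
  (∀ a b, a ≤ i → b ≤ i → q a = q b → a = b) ∧
  (∀ a b, a ≤ i → b ≤ i → (G.Adj (q a) (q b) ↔ (b = a + 1 ∨ a = b + 1)))

/-- `q 0, q 1, …, q (k-1)` is an induced cycle in `G`. -/
def IsInducedCycleOn {V : Type*} (G : SimpleGraph V) (q : ℕ → V) (k : ℕ) : Prop :=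
  (∀ a b, a < k → b < k → q a = q b → a = b) ∧
  (∀ a b, a < k → b < k →
    (G.Adj (q a) (q b) ↔
      ((b = a + 1 ∨ a = b + 1) ∨ (a = 0 ∧ b = k - 1) ∨ (b = 0 ∧ a = k - 1))))

/-- The set `A_i(D)` for the good sequence `D = z` (of a graph `G` without odd cycles of
length less than `k`). -/
def Aset {V : Type*} (G : SimpleGraph V) (k : ℕ) (z : ZMod k → V) (i : ℕ) : Set V :=
  if i = 0 then Set.univ
  else if i = 1 then G.neighborSet (z 0)
  else if i = 2 then {w | w ∉ G.neighborSet (z 0) ∧ G.dist (z 1) w = 2}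
  else if i = 3 then G.neighborSet (z 1) ∩ G.neighborSet (z 2)
  else if i = k - 1 then {w | IsInducedCycleOn G (seqAt z w (k - 1)) k}
  else {w | IsInducedPathOn G (seqAt z w i) i}

/-- The weight `w(D) = ∏_{i=0}^{k-1} |A_i(D)|⁻¹` of a good sequence `D = z`. -/
noncomputable def weight {V : Type*} (G : SimpleGraph V) (k : ℕ) (z : ZMod k → V) : ℝ :=
  ∏ i ∈ Finset.range k, ((Nat.card ↥(Aset G k z i) : ℝ))⁻¹

/-- The good sequence `D_j = (v_j, v_{j+1}, v_{j+3}, v_{j+2}, v_{j+4}, …, v_{j+k-1})`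
associated to the cycle `f = (v_0, …, v_{k-1})` (indices mod `k`). -/
def goodRot {V : Type*} {k : ℕ} (f : ZMod k → V) (j : ZMod k) : ZMod k → V :=
  goodOfCycle (fun i => f (j + i))

section Walks
variable {V : Type*} {G : SimpleGraph V} {k : ℕ}

/-- No closed walk of odd length `< k`. -/
lemma no_short_odd_walk (hG : NoShortOddCycle G k) :
    ∀ L, Odd L → L < k → ∀ p : ℕ → V,
      (∀ a < L, G.Adj (p a) (p (a+1))) → p L = p 0 → False := by
  intro L
  induction L using Nat.strong_induction_on with
  | _ L IH =>
  intro hodd hLk p hp hclosed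
  rcases Nat.lt_or_ge L 3 with hL3 | hL3
  · interval_cases L
    · simp at hodd
    · have := hp 0 (by norm_num)
      rw [hclosed] at this
      exact G.irrefl this
    · rcases hodd with ⟨c, hc⟩; omega
  · by_cases hinj : ∀ a b, a < L → b < L → p a = p b → a = b
    · haveI : NeZero L := ⟨by omega⟩
      refine hG L hodd hL3 hLk (fun i => p i.val) ⟨?_, ?_⟩
      · intro i j hij
        exact ZMod.val_injective L (hinj _ _ (ZMod.val_lt i) (ZMod.val_lt j) hij)
      · intro i
        show G.Adj (p i.val) (p ((i+1).val))
        have hv : (i + 1).val = (i.val + 1) % L := by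
          rw [ZMod.val_add, ZMod.val_one_eq_one_mod]
          rw [Nat.mod_eq_of_lt (by omega : 1 < L)]
        rcases Nat.lt_or_ge (i.val + 1) L with h | h
        · rw [hv, Nat.mod_eq_of_lt h]
          exact hp i.val (by omega)
        · have hival : i.val = L - 1 := by have := ZMod.val_lt i; omega
          have h0 : (i + 1).val = 0 := by
            rw [hv, hival, (by omega : L - 1 + 1 = L), Nat.mod_self]
          rw [h0, hival, ← hclosed, ← (by omega : L - 1 + 1 = L)]
          exact hp (L-1) (by omega)
    · push_neg at hinj
      have key : ∀ (a b : ℕ), a < b → b < L → p a = p b → False := by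
        intro a b hab hbL heq
        set ℓ₁ := b - a with hℓ₁
        set ℓ₂ := L - (b - a) with hℓ₂
        have hsum : ℓ₁ + ℓ₂ = L := by omega
        have hodd' : Odd ℓ₁ ∨ Odd ℓ₂ := by
          rcases Nat.even_or_odd ℓ₁ with ⟨x, hx⟩ | h1
          · right
            rcases Nat.even_or_odd ℓ₂ with ⟨y, hy⟩ | h2
            · exfalso; rcases hodd with ⟨c, hc⟩; omega
            · exact h2
          · left; exact h1
        rcases hodd' with h1 | h1
        · refine IH ℓ₁ (by omega) h1 (by omega) (fun c => p (a + c)) ?_ ?_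
          · intro c hc
            have := hp (a + c) (by omega)
            simpa [Nat.add_assoc] using this
          · show p (a + ℓ₁) = p (a + 0)
            rw [Nat.add_zero, (by omega : a + ℓ₁ = b), heq]
        · refine IH ℓ₂ (by omega) h1 (by omega)
            (fun c => if c ≤ a then p c else p (c + ℓ₁)) ?_ ?_
          · intro c hc
            show G.Adj (if c ≤ a then p c else p (c + ℓ₁))
              (if c + 1 ≤ a then p (c+1) else p (c + 1 + ℓ₁))
            rcases Nat.lt_or_ge c a with h2 | h2
            · rw [if_pos (Nat.le_of_lt h2), if_pos (by omega : c + 1 ≤ a)]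
              exact hp c (by omega)
            · rcases Nat.eq_or_lt_of_le h2 with h3 | h3
              · rw [if_pos (by omega : c ≤ a), if_neg (by omega : ¬ c + 1 ≤ a), ← h3]
                rw [(by omega : a + 1 + ℓ₁ = b + 1), heq]
                exact hp b (by omega)
              · rw [if_neg (by omega : ¬ c ≤ a), if_neg (by omega : ¬ c + 1 ≤ a),
                  (by omega : c + 1 + ℓ₁ = c + ℓ₁ + 1)]
                exact hp (c + ℓ₁) (by omega)
          · show (if ℓ₂ ≤ a then p ℓ₂ else p (ℓ₂ + ℓ₁)) = (if 0 ≤ a then p 0 else p (0 + ℓ₁))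
            rw [if_neg (by omega : ¬ ℓ₂ ≤ a), if_pos (Nat.zero_le a),
              (by omega : ℓ₂ + ℓ₁ = L), hclosed]
      obtain ⟨a, b, haL, hbL, hab, hne⟩ := hinj
      rcases Nat.lt_or_ge a b with h | h
      · exact key a b h hbL hab
      · exact key b a (by omega) haL hab.symm
end Walks

section Parity
variable {V : Type*} {G : SimpleGraph V} {k : ℕ}

lemma walk_parity' [NeZero k] (hG : NoShortOddCycle G k)
    (f : ZMod k → V) (hf : ∀ i, G.Adj (f i) (f (i + 1)))
    (a b : ZMod k) (s t : ℕ) (hab : a + (t : ZMod k) = b)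
    (r : ℕ → V) (h0 : r 0 = f a) (hs : r s = f b)
    (hr : ∀ c < s, G.Adj (r c) (r (c+1)))
    (hodd : Odd (s + t)) : k ≤ s + t := by
  by_contra hlt
  push_neg at hlt
  refine no_short_odd_walk hG (s + t) hodd hlt
    (fun c => if c ≤ t then f (a + (c:ℕ)) else r (t + s - c)) ?_ ?_
  · intro c hc
    show G.Adj (if c ≤ t then f (a + (c:ℕ)) else r (t + s - c))
      (if c + 1 ≤ t then f (a + ((c+1:ℕ):ZMod k)) else r (t + s - (c+1)))
    rcases Nat.lt_or_ge c t with h1 | h1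
    · rw [if_pos (Nat.le_of_lt h1), if_pos (by omega : c + 1 ≤ t)]
      have := hf (a + (c:ℕ))
      convert this using 2
      push_cast; ring
    · have hcs : t + s - (c+1) < s := by omega
      have hadj := (hr (t + s - (c+1)) hcs).symm
      rw [(by omega : t + s - (c+1) + 1 = t + s - c)] at hadj
      rcases Nat.eq_or_lt_of_le h1 with h2 | h2
      · rw [if_pos (by omega : c ≤ t), if_neg (by omega : ¬ c + 1 ≤ t), ← h2]
        rw [← h2] at hadj
        rw [(by omega : t + s - t = s)] at hadj
        rw [hab, ← hs]
        exact hadj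
      · rw [if_neg (by omega : ¬ c ≤ t), if_neg (by omega : ¬ c + 1 ≤ t)]
        exact hadj
  · show (if s + t ≤ t then f (a + ((s+t:ℕ):ZMod k)) else r (t + s - (s+t)))
      = (if 0 ≤ t then f (a + ((0:ℕ):ZMod k)) else r (t + s - 0))
    rw [if_pos (Nat.zero_le t)]
    rcases Nat.eq_zero_or_pos s with hs0 | hs0
    · subst hs0
      rw [if_pos (by omega : 0 + t ≤ t)]
      simp only [Nat.zero_add, Nat.cast_zero, add_zero]
      rw [hab, ← hs, h0]
    · rw [if_neg (by omega : ¬ s + t ≤ t), (by omega : t + s - (s + t) = 0), h0]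
      simp

lemma walk_parity [NeZero k] (hG : NoShortOddCycle G k)
    (f : ZMod k → V) (hf : ∀ i, G.Adj (f i) (f (i + 1)))
    (a b : ZMod k) (s : ℕ) (r : ℕ → V) (h0 : r 0 = f a) (hs : r s = f b)
    (hr : ∀ c < s, G.Adj (r c) (r (c+1)))
    (hodd : Odd (s + (b - a).val)) : k ≤ s + (b - a).val := by
  refine walk_parity' hG f hf a b s (b-a).val ?_ r h0 hs hr hodd
  rw [ZMod.natCast_val, ZMod.cast_id]; ring
end Parity

section Paths
variable {V : Type*} {G : SimpleGraph V} {k : ℕ} [NeZero k]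

lemma eq_cast_of_val {a : ℕ} {x : ZMod k} (h : x.val = a) : x = (a : ZMod k) := by
  rw [← h, ZMod.natCast_val, ZMod.cast_id]

lemma cast_k_sub {a : ℕ} (ha : a ≤ k) : ((k - a : ℕ) : ZMod k) = - (a : ZMod k) := by
  rw [Nat.cast_sub ha, ZMod.natCast_self, zero_sub]

lemma val_ne_zero_of_ne {x y : ZMod k} (h : x ≠ y) : (y - x).val ≠ 0 := by
  intro h0
  rw [ZMod.val_eq_zero, sub_eq_zero] at h0
  exact h h0.symm

/-- classification for a path of length 2 (`f a — u — f b`). -/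
lemma path2_classify (hG : NoShortOddCycle G k) (hodd : Odd k) (hk : 7 ≤ k)
    (f : ZMod k → V) (hf : ∀ i, G.Adj (f i) (f (i + 1)))
    {a b : ZMod k} {u : V} (h1 : G.Adj (f a) u) (h2 : G.Adj u (f b)) (hne : a ≠ b) :
    b = a + 2 ∨ a = b + 2 := by
  obtain ⟨K, hK⟩ := hodd
  have hwalk : ∀ (a' b' : ZMod k), G.Adj (f a') u → G.Adj u (f b') →
      Odd (2 + (b' - a').val) → k ≤ 2 + (b' - a').val := by
    intro a' b' ha' hb' hodd'
    refine walk_parity hG f hf a' b' 2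
      (fun c => if c = 0 then f a' else if c = 1 then u else f b') rfl rfl ?_ hodd'
    intro c hc
    interval_cases c
    · simpa using ha'
    · simpa using hb'
  have htlt : (b - a).val < k := ZMod.val_lt _
  have htne : (b - a).val ≠ 0 := val_ne_zero_of_ne hne
  have hneg : (a - b).val = k - (b - a).val := by
    have : a - b = -(b - a) := by ring
    rw [this, ZMod.neg_val, if_neg (by simpa [sub_eq_zero] using (Ne.symm hne))]
  rcases Nat.even_or_odd (b - a).val with ⟨e, he⟩ | ⟨e, he⟩
  · -- t even, so use the reversed direction
    have := hwalk b a h2.symm h1.symm ⟨(k - (b-a).val)/2 + 1, by rw [hneg]; omega⟩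
    rw [hneg] at this
    have ht : (b - a).val = 2 := by omega
    left
    have := eq_cast_of_val ht
    rw [show ((2:ℕ) : ZMod k) = 2 by norm_cast] at this
    linear_combination this
  · have := hwalk a b h1 h2 ⟨e + 1, by omega⟩
    have ht : (b - a).val = k - 2 := by omega
    right
    have h4 := eq_cast_of_val ht
    rw [cast_k_sub (by omega), show ((2:ℕ) : ZMod k) = 2 by norm_cast] at h4
    linear_combination -h4

/-- classification for a path of length 3 (`f a — x — u — f b`). -/
lemma path3_classify (hG : NoShortOddCycle G k) (hodd : Odd k) (hk : 7 ≤ k)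
    (f : ZMod k → V) (hf : ∀ i, G.Adj (f i) (f (i + 1)))
    {a b : ZMod k} {x u : V} (h1 : G.Adj (f a) x) (h2 : G.Adj x u) (h3 : G.Adj u (f b)) :
    (b - a).val = 1 ∨ (b - a).val = 3 ∨ (b - a).val = k - 3 ∨ (b - a).val = k - 1 := by
  obtain ⟨K, hK⟩ := hodd
  have hwalk : ∀ (a' b' : ZMod k) (x' u' : V), G.Adj (f a') x' → G.Adj x' u' → G.Adj u' (f b') →
      Odd (3 + (b' - a').val) → k ≤ 3 + (b' - a').val := by
    intro a' b' x' u' ha' hx' hb' hodd'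
    refine walk_parity hG f hf a' b' 3
      (fun c => if c = 0 then f a' else if c = 1 then x' else if c = 2 then u' else f b')
      rfl rfl ?_ hodd'
    intro c hc
    interval_cases c
    · simpa using ha'
    · simpa using hx'
    · simpa using hb'
  have htlt : (b - a).val < k := ZMod.val_lt _
  by_cases hab : a = b
  · exfalso
    have h0 : (b - a).val = 0 := by rw [hab, sub_self, ZMod.val_zero]
    have := hwalk a b x u h1 h2 h3 (by rw [h0]; exact ⟨1, by omega⟩)
    omega
  · have htne : (b - a).val ≠ 0 := val_ne_zero_of_ne hab
    have hneg : (a - b).val = k - (b - a).val := by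
      have : a - b = -(b - a) := by ring
      rw [this, ZMod.neg_val, if_neg (by simpa [sub_eq_zero] using (Ne.symm hab))]
    rcases Nat.even_or_odd (b - a).val with ⟨e, he⟩ | ⟨e, he⟩
    · have := hwalk a b x u h1 h2 h3 ⟨e + 1, by omega⟩
      omega
    · have := hwalk b a u x h3.symm h2.symm h1.symm ⟨(k - (b-a).val)/2 + 1, by rw [hneg]; omega⟩
      rw [hneg] at this
      omega

/-- there is no path of length 4 between consecutive cycle vertices. -/
lemma no_path4 (hG : NoShortOddCycle G k) (hk : 7 ≤ k)
    (f : ZMod k → V) (hf : ∀ i, G.Adj (f i) (f (i + 1)))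
    {a : ZMod k} {x u y : V} (h1 : G.Adj (f a) x) (h2 : G.Adj x u) (h3 : G.Adj u y)
    (h4 : G.Adj y (f (a + 1))) : False := by
  have hval : ((a + 1) - a).val = 1 := by
    rw [add_sub_cancel_left]
    have : ((1:ℕ) : ZMod k) = 1 := by norm_cast
    rw [← this, ZMod.val_cast_of_lt (by omega)]
  have := walk_parity hG f hf a (a+1) 4
    (fun c => if c = 0 then f a else if c = 1 then x else if c = 2 then u else
      if c = 3 then y else f (a+1)) rfl rfl ?_ (by rw [hval]; exact ⟨2, by omega⟩)
  · rw [hval] at this; omega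
  · intro c hc
    interval_cases c
    · simpa using h1
    · simpa using h2
    · simpa using h3
    · simpa using h4
end Paths

section Membership
variable {V : Type*} {G : SimpleGraph V} {k : ℕ}

lemma cast_ne_cast {a b : ℕ} (ha : a < k) (hb : b < k) (hab : a ≠ b) :
    (a : ZMod k) ≠ (b : ZMod k) := by
  intro h
  have := congrArg ZMod.val h
  rw [ZMod.val_cast_of_lt ha, ZMod.val_cast_of_lt hb] at this
  exact hab this

lemma zm_ne (hk : 7 ≤ k) {a b : ℕ} (ha : a < k) (hb : b < k) (hab : a ≠ b)
    {x y : ZMod k} (hx : (a : ZMod k) = x) (hy : (b : ZMod k) = y) : x ≠ y := by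
  rw [← hx, ← hy]; exact cast_ne_cast ha hb hab

lemma goodRot_zero (hk : 7 ≤ k) (f : ZMod k → V) (j : ZMod k) : goodRot f j 0 = f j := by
  unfold goodRot goodOfCycle
  rw [if_neg (zm_ne hk (a:=0) (b:=2) (by omega) (by omega) (by omega) (by norm_cast) (by norm_cast)),
    if_neg (zm_ne hk (a:=0) (b:=3) (by omega) (by omega) (by omega) (by norm_cast) (by norm_cast))]
  show f (j + 0) = f j
  rw [add_zero]

lemma goodRot_one (hk : 7 ≤ k) (f : ZMod k → V) (j : ZMod k) : goodRot f j 1 = f (j+1) := by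
  unfold goodRot goodOfCycle
  rw [if_neg (zm_ne hk (a:=1) (b:=2) (by omega) (by omega) (by omega) (by norm_cast) (by norm_cast)),
    if_neg (zm_ne hk (a:=1) (b:=3) (by omega) (by omega) (by omega) (by norm_cast) (by norm_cast))]

lemma goodRot_two (hk : 7 ≤ k) (f : ZMod k → V) (j : ZMod k) : goodRot f j 2 = f (j+3) := by
  unfold goodRot goodOfCycle
  rw [if_pos rfl]

lemma goodRot_three (hk : 7 ≤ k) (f : ZMod k → V) (j : ZMod k) : goodRot f j 3 = f (j+2) := by
  unfold goodRot goodOfCycle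
  rw [if_neg (zm_ne hk (a:=3) (b:=2) (by omega) (by omega) (by omega) (by norm_cast) (by norm_cast)),
    if_pos rfl]

lemma seqAt_self {z : ZMod k → V} {u : V} {i : ℕ} : seqAt z u i i = u := by
  unfold seqAt; rw [if_pos rfl]

lemma seqAt_eq (hk : 7 ≤ k) (f : ZMod k → V) (j : ZMod k) (u : V) {i a : ℕ}
    (ha : a < i) (hik : i ≤ k - 1) :
    seqAt (goodRot f j) u i a = f (j + (a : ZMod k)) := by
  haveI : NeZero k := ⟨by omega⟩
  unfold seqAt
  rw [if_neg (by omega : ¬ a = i)]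
  by_cases h2 : a = 2
  · subst h2
    rw [if_pos rfl, goodRot_three hk]
    norm_cast
  · rw [if_neg h2]
    by_cases h3 : a = 3
    · subst h3
      rw [if_pos rfl, goodRot_two hk]
      norm_cast
    · rw [if_neg h3]
      unfold goodRot goodOfCycle
      rw [if_neg (zm_ne hk (a:=a) (b:=2) (by omega) (by omega) (by omega) rfl (by norm_cast)),
        if_neg (zm_ne hk (a:=a) (b:=3) (by omega) (by omega) (by omega) rfl (by norm_cast))]

lemma memA1 (hk : 7 ≤ k) (f : ZMod k → V) (j : ZMod k) (u : V) :
    u ∈ Aset G k (goodRot f j) 1 ↔ G.Adj (f j) u := by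
  unfold Aset
  rw [if_neg (by omega : ¬ (1:ℕ) = 0), if_pos rfl, goodRot_zero hk]
  exact SimpleGraph.mem_neighborSet _ _ _

lemma memA2 (hk : 7 ≤ k) (f : ZMod k → V) (j : ZMod k) (u : V) :
    u ∈ Aset G k (goodRot f j) 2 ↔ (¬ G.Adj (f j) u ∧ G.dist (f (j+1)) u = 2) := by
  unfold Aset
  rw [if_neg (by omega : ¬ (2:ℕ) = 0), if_neg (by omega : ¬ (2:ℕ) = 1), if_pos rfl,
    goodRot_zero hk, goodRot_one hk]
  rfl

lemma memA3 (hk : 7 ≤ k) (f : ZMod k → V) (j : ZMod k) (u : V) :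
    u ∈ Aset G k (goodRot f j) 3 ↔ (G.Adj (f (j+1)) u ∧ G.Adj (f (j+3)) u) := by
  unfold Aset
  rw [if_neg (by omega : ¬ (3:ℕ) = 0), if_neg (by omega : ¬ (3:ℕ) = 1),
    if_neg (by omega : ¬ (3:ℕ) = 2), if_pos rfl, goodRot_one hk, goodRot_two hk]
  rfl

lemma memPath (hk : 7 ≤ k) (f : ZMod k → V) (j : ZMod k) (u : V) {i : ℕ}
    (h4 : 4 ≤ i) (hik : i ≤ k - 2) (hmem : u ∈ Aset G k (goodRot f j) i) :
    G.Adj (f (j + ((i-1 : ℕ) : ZMod k))) u ∧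
      ∀ a : ℕ, a ≤ i - 2 → ¬ G.Adj (f (j + (a : ZMod k))) u := by
  unfold Aset at hmem
  rw [if_neg (by omega), if_neg (by omega), if_neg (by omega), if_neg (by omega),
    if_neg (by omega)] at hmem
  obtain ⟨hinj, hadj⟩ := hmem
  constructor
  · have := (hadj (i-1) i (by omega) (le_refl i)).mpr (Or.inl (by omega))
    rwa [seqAt_self, seqAt_eq hk f j u (by omega) (by omega)] at this
  · intro a ha hA
    have := (hadj a i (by omega) (le_refl i)).mp
      (by rwa [seqAt_self, seqAt_eq hk f j u (by omega) (by omega)])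
    omega

lemma memCyc (hk : 7 ≤ k) (f : ZMod k → V) (j : ZMod k) (u : V)
    (hmem : u ∈ Aset G k (goodRot f j) (k-1)) :
    G.Adj (f j) u ∧ G.Adj (f (j + ((k-2 : ℕ) : ZMod k))) u := by
  unfold Aset at hmem
  rw [if_neg (by omega), if_neg (by omega), if_neg (by omega), if_neg (by omega),
    if_pos rfl] at hmem
  obtain ⟨hinj, hadj⟩ := hmem
  constructor
  · have := (hadj 0 (k-1) (by omega) (by omega)).mpr (Or.inr (Or.inl ⟨rfl, rfl⟩))
    rw [seqAt_self, seqAt_eq hk f j u (by omega) (by omega)] at this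
    simpa using this
  · have := (hadj (k-2) (k-1) (by omega) (by omega)).mpr (Or.inl (Or.inl (by omega)))
    rwa [seqAt_self, seqAt_eq hk f j u (by omega) (by omega)] at this
end Membership

section PerVertex
open scoped Classical
variable {V : Type*} {G : SimpleGraph V} {k : ℕ}

lemma dist_two_witness {a u : V} (h : G.dist a u = 2) : ∃ x, G.Adj a x ∧ G.Adj x u := by
  obtain ⟨p, hp⟩ := SimpleGraph.exists_walk_of_dist_ne_zero (by omega : G.dist a u ≠ 0)
  have hl : p.length = 2 := by rw [hp, h]
  have h2 : p.getVert 2 = u := by rw [← hl]; exact p.getVert_length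
  refine ⟨p.getVert 1, ?_, ?_⟩
  · have := p.adj_getVert_succ (i := 0) (by omega)
    simpa using this
  · have := p.adj_getVert_succ (i := 1) (by omega)
    rwa [(by norm_num : 1 + 1 = 2), h2] at this

lemma case0 [NeZero k] (hG : NoShortOddCycle G k) (hodd : Odd k) (hk : 7 ≤ k)
    (f : ZMod k → V) (hf : ∀ i, G.Adj (f i) (f (i+1))) (u : V)
    (h0 : ∀ m, ¬ G.Adj u (f m)) :
    (∑ j : ZMod k, if G.Adj (f j) u then 1 else 0) +
      2 * ∑ j : ZMod k, ((Finset.Icc 2 (k-1)).filter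
        (fun i => u ∈ Aset G k (goodRot f j) i)).card ≤ 2 * (k - 1) := by
  have hS1 : (∑ j : ZMod k, if G.Adj (f j) u then 1 else 0) = 0 := by
    apply Finset.sum_eq_zero; intro j _
    rw [if_neg]; exact fun h => h0 j h.symm
  have hsub : ∀ j : ZMod k, ((Finset.Icc 2 (k-1)).filter
      (fun i => u ∈ Aset G k (goodRot f j) i)) ⊆ {2} := by
    intro j i hi
    rw [Finset.mem_filter, Finset.mem_Icc] at hi
    obtain ⟨⟨h2i, hik⟩, hmem⟩ := hi
    rw [Finset.mem_singleton]
    by_contra hne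
    rcases (by omega : i = 3 ∨ i = k-1 ∨ (4 ≤ i ∧ i ≤ k - 2)) with h3 | hkm | ⟨h4, hk2⟩
    · rw [h3] at hmem
      exact h0 _ ((memA3 hk f j u).mp hmem).1.symm
    · rw [hkm] at hmem
      exact h0 _ (memCyc hk f j u hmem).1.symm
    · exact h0 _ ((memPath hk f j u h4 hk2 hmem).1).symm
  have hempty : ∃ j0 : ZMod k, ((Finset.Icc 2 (k-1)).filter
      (fun i => u ∈ Aset G k (goodRot f j0) i)) = ∅ := by
    by_cases hd : ∀ m : ZMod k, G.dist (f m) u = 2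
    · exfalso
      obtain ⟨x, hx1, hx2⟩ := dist_two_witness (hd 0)
      obtain ⟨y, hy1, hy2⟩ := dist_two_witness (hd 1)
      exact no_path4 hG hk f hf (a := 0) hx1 hx2 hy2.symm
        (by rw [zero_add]; exact hy1.symm)
    · push_neg at hd; obtain ⟨m, hm⟩ := hd
      refine ⟨m - 1, Finset.eq_empty_iff_forall_notMem.mpr ?_⟩
      intro i hi
      have h2 := hsub _ hi
      rw [Finset.mem_singleton] at h2
      rw [Finset.mem_filter] at hi
      rw [h2] at hi
      have := (memA2 hk f (m-1) u).mp hi.2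
      rw [sub_add_cancel] at this
      exact hm this.2
  obtain ⟨j0, hj0⟩ := hempty
  have hbound : ∑ j : ZMod k, ((Finset.Icc 2 (k-1)).filter
      (fun i => u ∈ Aset G k (goodRot f j) i)).card ≤ k - 1 := by
    rw [← Finset.sum_erase_add _ _ (Finset.mem_univ j0), hj0, Finset.card_empty, add_zero]
    calc ∑ j ∈ Finset.univ.erase j0, ((Finset.Icc 2 (k-1)).filter
          (fun i => u ∈ Aset G k (goodRot f j) i)).card
        ≤ ∑ _j ∈ Finset.univ.erase j0, 1 := by
          apply Finset.sum_le_sum; intro j _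
          calc _ ≤ ({2} : Finset ℕ).card := Finset.card_le_card (hsub j)
          _ = 1 := Finset.card_singleton 2
      _ = (Finset.univ.erase j0).card := by rw [Finset.sum_const, smul_eq_mul, mul_one]
      _ = k - 1 := by
          rw [Finset.card_erase_of_mem (Finset.mem_univ j0), Finset.card_univ, ZMod.card]
  omega
end PerVertex

section PerVertex2
open scoped Classical
variable {V : Type*} {G : SimpleGraph V} {k : ℕ}

lemma sum_path_indicator [NeZero k] (hk : 7 ≤ k) (w : ZMod k) :
    (∑ j : ZMod k, if (w - j).val ∈ Finset.Icc 3 (k-3) then 1 else 0) ≤ k - 5 := by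
  rw [← Finset.card_filter]
  have hinj : Set.InjOn (fun j : ZMod k => (w - j).val)
      (Finset.univ.filter (fun j : ZMod k => (w - j).val ∈ Finset.Icc 3 (k-3))) := by
    intro a _ b _ hab
    have ha := eq_cast_of_val (x := w - a) rfl
    have hb := eq_cast_of_val (x := w - b) rfl
    simp only at hab
    rw [hab] at ha
    rw [← hb] at ha
    linear_combination -ha
  calc _ ≤ (Finset.Icc 3 (k-3)).card := by
        apply Finset.card_le_card_of_injOn (fun j => (w - j).val) _ hinj
        intro a ha
        rw [Finset.mem_coe, Finset.mem_filter] at ha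
        exact ha.2
    _ = k - 5 := by rw [Nat.card_Icc]; omega

lemma card_triple_le {α : Type*} [DecidableEq α] (a b c : α) :
    ({a, b, c} : Finset α).card ≤ 3 := by
  apply (Finset.card_insert_le _ _).trans
  have := (Finset.card_insert_le b {c})
  simp only [Finset.card_singleton] at this
  omega

lemma case1 [NeZero k] (hG : NoShortOddCycle G k) (hodd : Odd k) (hk : 7 ≤ k)
    (f : ZMod k → V) (hf : ∀ i, G.Adj (f i) (f (i+1))) (u : V) (m : ZMod k)
    (h0 : G.Adj u (f m)) (h1 : ∀ m', G.Adj u (f m') → m' = m) :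
    (∑ j : ZMod k, if G.Adj (f j) u then 1 else 0) +
      2 * ∑ j : ZMod k, ((Finset.Icc 2 (k-1)).filter
        (fun i => u ∈ Aset G k (goodRot f j) i)).card ≤ 2 * (k - 1) := by
  obtain ⟨K, hK⟩ := hodd
  have hS1 : (∑ j : ZMod k, if G.Adj (f j) u then 1 else 0) = 1 := by
    rw [← Finset.card_filter]
    have : Finset.univ.filter (fun j : ZMod k => G.Adj (f j) u) = {m} := by
      ext j
      simp only [Finset.mem_filter, Finset.mem_univ, true_and, Finset.mem_singleton]
      constructor
      · intro h; exact h1 _ h.symm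
      · rintro rfl; exact h0.symm
    rw [this, Finset.card_singleton]
  -- the target finset for each column
  set T : ZMod k → Finset ℕ := fun j =>
    (if (m - j).val ∈ Finset.Icc 3 (k-3) then {(m - j).val + 1} else ∅) ∪
    (if j = m-2 ∨ j = m-4 ∨ j = m+2 then {2} else ∅) with hT
  have hsub : ∀ j : ZMod k, ((Finset.Icc 2 (k-1)).filter
      (fun i => u ∈ Aset G k (goodRot f j) i)) ⊆ T j := by
    intro j i hi
    rw [Finset.mem_filter, Finset.mem_Icc] at hi
    obtain ⟨⟨h2i, hik⟩, hmem⟩ := hi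
    rcases (by omega : i = 2 ∨ i = 3 ∨ i = k-1 ∨ (4 ≤ i ∧ i ≤ k - 2)) with h2 | h3 | hkm | ⟨h4, hk2⟩
    · -- i = 2
      rw [h2] at hmem ⊢
      obtain ⟨hnadj, hdist⟩ := (memA2 hk f j u).mp hmem
      obtain ⟨x, hx1, hx2⟩ := dist_two_witness hdist
      have hcls := path3_classify hG ⟨K, hK⟩ hk f hf (a := j+1) (b := m) hx1 hx2 h0
      have hP2 : j = m-2 ∨ j = m-4 ∨ j = m+2 := by
        rcases hcls with ht | ht | ht | ht
        · left
          have := eq_cast_of_val ht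
          rw [Nat.cast_one] at this
          linear_combination -this
        · right; left
          have := eq_cast_of_val ht
          rw [show (((3:ℕ)):ZMod k) = 3 by norm_cast] at this
          linear_combination -this
        · right; right
          have := eq_cast_of_val ht
          rw [cast_k_sub (by omega), show (((3:ℕ)):ZMod k) = 3 by norm_cast] at this
          linear_combination -this
        · exfalso
          have := eq_cast_of_val ht
          rw [cast_k_sub (by omega), Nat.cast_one] at this
          have hjm : j = m := by linear_combination -this
          rw [hjm] at hnadj
          exact hnadj h0.symm
      exact Finset.mem_union_right _ (by rw [if_pos hP2]; exact Finset.mem_singleton_self 2)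
    · -- i = 3 : impossible
      exfalso
      rw [h3] at hmem
      obtain ⟨ha, hb⟩ := (memA3 hk f j u).mp hmem
      have ha' := h1 _ ha.symm
      have hb' := h1 _ hb.symm
      have : (2 : ZMod k) = 0 := by linear_combination hb' - ha'
      exact zm_ne hk (a := 2) (b := 0) (by omega) (by omega) (by omega)
        (by norm_cast) (by norm_cast) this
    · -- i = k-1 : impossible
      exfalso
      rw [hkm] at hmem
      obtain ⟨ha, hb⟩ := memCyc hk f j u hmem
      have ha' := h1 _ ha.symm
      have hb' := h1 _ hb.symm
      have : ((k-2:ℕ) : ZMod k) = ((0:ℕ) : ZMod k) := by push_cast; linear_combination hb' - ha'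
      exact cast_ne_cast (by omega) (by omega) (by omega) this
    · -- path case
      obtain ⟨hadjend, hnon⟩ := memPath hk f j u h4 hk2 hmem
      have hjm := h1 _ hadjend.symm
      have hval : (m - j).val = i - 1 := by
        have hcast : ((i-1:ℕ) : ZMod k) = m - j := by linear_combination hjm
        rw [← hcast, ZMod.val_cast_of_lt (by omega)]
      apply Finset.mem_union_left
      rw [if_pos (by rw [hval]; rw [Finset.mem_Icc]; omega)]
      rw [Finset.mem_singleton, hval]
      omega
  have hbound : ∑ j : ZMod k, ((Finset.Icc 2 (k-1)).filter
      (fun i => u ∈ Aset G k (goodRot f j) i)).card ≤ k - 2 := by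
    have step : ∀ j : ZMod k, ((Finset.Icc 2 (k-1)).filter
        (fun i => u ∈ Aset G k (goodRot f j) i)).card ≤
        (if (m - j).val ∈ Finset.Icc 3 (k-3) then 1 else 0) +
        (if j = m-2 ∨ j = m-4 ∨ j = m+2 then 1 else 0) := by
      intro j
      calc _ ≤ (T j).card := Finset.card_le_card (hsub j)
        _ ≤ _ := by
            apply (Finset.card_union_le _ _).trans
            gcongr <;> (split <;> simp)
    calc _ ≤ ∑ j : ZMod k, ((if (m - j).val ∈ Finset.Icc 3 (k-3) then 1 else 0) +
          (if j = m-2 ∨ j = m-4 ∨ j = m+2 then 1 else 0)) := Finset.sum_le_sum (fun j _ => step j)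
      _ = (∑ j : ZMod k, if (m - j).val ∈ Finset.Icc 3 (k-3) then 1 else 0) +
          (∑ j : ZMod k, if j = m-2 ∨ j = m-4 ∨ j = m+2 then 1 else 0) := Finset.sum_add_distrib
      _ ≤ (k - 5) + 3 := by
          gcongr
          · exact sum_path_indicator hk m
          · rw [← Finset.card_filter]
            calc (Finset.univ.filter (fun j : ZMod k => j = m-2 ∨ j = m-4 ∨ j = m+2)).card
                ≤ ({m-2, m-4, m+2} : Finset (ZMod k)).card := by
                  apply Finset.card_le_card
                  intro j hj
                  rw [Finset.mem_filter] at hj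
                  simp only [Finset.mem_insert, Finset.mem_singleton]
                  exact hj.2
              _ ≤ 3 := card_triple_le _ _ _
      _ ≤ k - 2 := by omega
  omega
end PerVertex2

section PerVertex3
open scoped Classical
variable {V : Type*} {G : SimpleGraph V} {k : ℕ}

lemma case2 [NeZero k] (hG : NoShortOddCycle G k) (hodd : Odd k) (hk : 7 ≤ k)
    (f : ZMod k → V) (hf : ∀ i, G.Adj (f i) (f (i+1))) (u : V) (m : ZMod k)
    (h0a : G.Adj u (f (m-1))) (h0b : G.Adj u (f (m+1)))
    (h1 : ∀ m', G.Adj u (f m') → m' = m-1 ∨ m' = m+1) :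
    (∑ j : ZMod k, if G.Adj (f j) u then 1 else 0) +
      2 * ∑ j : ZMod k, ((Finset.Icc 2 (k-1)).filter
        (fun i => u ∈ Aset G k (goodRot f j) i)).card ≤ 2 * (k - 1) := by
  obtain ⟨K, hK⟩ := hodd
  have htwo : (2 : ZMod k) ≠ 0 := zm_ne hk (a := 2) (b := 0) (by omega) (by omega) (by omega)
    (by norm_cast) (by norm_cast)
  have hfour : (4 : ZMod k) ≠ 0 := zm_ne hk (a := 4) (b := 0) (by omega) (by omega) (by omega)
    (by norm_cast) (by norm_cast)
  have hne : (m - 1 : ZMod k) ≠ m + 1 := by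
    intro h; exact htwo (by linear_combination -h)
  have hS1 : (∑ j : ZMod k, if G.Adj (f j) u then 1 else 0) = 2 := by
    rw [← Finset.card_filter]
    have : Finset.univ.filter (fun j : ZMod k => G.Adj (f j) u) = {m-1, m+1} := by
      ext j
      simp only [Finset.mem_filter, Finset.mem_univ, true_and, Finset.mem_insert,
        Finset.mem_singleton]
      constructor
      · intro h; exact h1 _ h.symm
      · rintro (rfl | rfl)
        · exact h0a.symm
        · exact h0b.symm
    rw [this, Finset.card_pair hne]
  set T : ZMod k → Finset ℕ := fun j =>
    ((if (m - 1 - j).val ∈ Finset.Icc 3 (k-3) then {(m - 1 - j).val + 1} else ∅) ∪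
     (if j = m-3 then {2} else ∅)) ∪
    ((if j = m-2 then {3} else ∅) ∪
     (if j = m+1 then {k-1} else ∅)) with hT
  have hsub : ∀ j : ZMod k, ((Finset.Icc 2 (k-1)).filter
      (fun i => u ∈ Aset G k (goodRot f j) i)) ⊆ T j := by
    intro j i hi
    rw [Finset.mem_filter, Finset.mem_Icc] at hi
    obtain ⟨⟨h2i, hik⟩, hmem⟩ := hi
    rcases (by omega : i = 2 ∨ i = 3 ∨ i = k-1 ∨ (4 ≤ i ∧ i ≤ k - 2)) with h2 | h3 | hkm | ⟨h4, hk2⟩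
    · -- i = 2
      rw [h2] at hmem ⊢
      obtain ⟨hnadj, hdist⟩ := (memA2 hk f j u).mp hmem
      obtain ⟨x, hx1, hx2⟩ := dist_two_witness hdist
      have hcls1 := path3_classify hG ⟨K, hK⟩ hk f hf (a := j+1) (b := m-1) hx1 hx2 h0a
      have hcls2 := path3_classify hG ⟨K, hK⟩ hk f hf (a := j+1) (b := m+1) hx1 hx2 h0b
      have hrw : (m + 1 - (j+1) : ZMod k) = m - j := by ring
      rw [hrw] at hcls2
      have hjm3 : j = m - 3 := by
        rcases hcls2 with ht | ht | ht | ht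
        · exfalso
          have := eq_cast_of_val ht
          rw [Nat.cast_one] at this
          have : j = m - 1 := by linear_combination -this
          rw [this] at hnadj
          exact hnadj h0a.symm
        · have := eq_cast_of_val ht
          rw [show (((3:ℕ)):ZMod k) = 3 by norm_cast] at this
          linear_combination -this
        · exfalso
          have hj3 := eq_cast_of_val ht
          rw [cast_k_sub (by omega), show (((3:ℕ)):ZMod k) = 3 by norm_cast] at hj3
          -- j = m + 3
          have hj : j = m + 3 := by linear_combination -hj3
          have hm5 : (m - 1 - (j+1) : ZMod k) = ((k-5 : ℕ) : ZMod k) := by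
            rw [cast_k_sub (by omega), hj]
            push_cast
            ring
          rw [hm5, ZMod.val_cast_of_lt (by omega)] at hcls1
          omega
        · exfalso
          have := eq_cast_of_val ht
          rw [cast_k_sub (by omega), Nat.cast_one] at this
          have : j = m + 1 := by linear_combination -this
          rw [this] at hnadj
          exact hnadj h0b.symm
      exact Finset.mem_union_left _ (Finset.mem_union_right _
        (by rw [if_pos hjm3]; exact Finset.mem_singleton_self 2))
    · -- i = 3
      rw [h3] at hmem ⊢
      obtain ⟨ha, hb⟩ := (memA3 hk f j u).mp hmem
      have ha' := h1 _ ha.symm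
      have hb' := h1 _ hb.symm
      have hjm2 : j = m - 2 := by
        rcases ha' with ha' | ha' <;> rcases hb' with hb' | hb'
        · exact absurd (by linear_combination hb' - ha' : (2:ZMod k) = 0) htwo
        · linear_combination ha'
        · exact absurd (by linear_combination hb' - ha' : (4:ZMod k) = 0) hfour
        · exact absurd (by linear_combination hb' - ha' : (2:ZMod k) = 0) htwo
      exact Finset.mem_union_right _ (Finset.mem_union_left _
        (by rw [if_pos hjm2]; exact Finset.mem_singleton_self 3))
    · -- i = k-1
      rw [hkm] at hmem ⊢
      obtain ⟨ha, hb⟩ := memCyc hk f j u hmem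
      have ha' := h1 _ ha.symm
      have hb' := h1 _ hb.symm
      have hc : ((k-2:ℕ) : ZMod k) = -2 := by
        rw [cast_k_sub (by omega)]; norm_cast
      rw [hc] at hb'
      have hjm1 : j = m + 1 := by
        rcases ha' with ha' | ha' <;> rcases hb' with hb' | hb'
        · exact absurd (by linear_combination ha' - hb' : (2:ZMod k) = 0) htwo
        · exact absurd (by linear_combination ha' - hb' : (4:ZMod k) = 0) hfour
        · exact ha'
        · exact absurd (by linear_combination ha' - hb' : (2:ZMod k) = 0) htwo
      exact Finset.mem_union_right _ (Finset.mem_union_right _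
        (by rw [if_pos hjm1]; exact Finset.mem_singleton_self (k-1)))
    · -- path case
      obtain ⟨hadjend, hnon⟩ := memPath hk f j u h4 hk2 hmem
      rcases h1 _ hadjend.symm with hend | hend
      · -- endpoint is m - 1
        have hval : (m - 1 - j).val = i - 1 := by
          have hcast : ((i-1:ℕ) : ZMod k) = m - 1 - j := by linear_combination hend
          rw [← hcast, ZMod.val_cast_of_lt (by omega)]
        apply Finset.mem_union_left
        apply Finset.mem_union_left
        rw [if_pos (by rw [hval, Finset.mem_Icc]; omega)]
        rw [Finset.mem_singleton, hval]
        omega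
      · -- endpoint m + 1 : contradiction with induced property
        exfalso
        have hstep : ((i-1:ℕ) : ZMod k) = ((i-3:ℕ) : ZMod k) + 2 := by
          rw [(by omega : i - 1 = (i-3) + 2)]
          push_cast
          ring
        rw [hstep] at hend
        have h5 : j + ((i-3:ℕ) : ZMod k) = m - 1 := by linear_combination hend
        have := hnon (i-3) (by omega)
        rw [h5] at this
        exact this h0a.symm
  have hbound : ∑ j : ZMod k, ((Finset.Icc 2 (k-1)).filter
      (fun i => u ∈ Aset G k (goodRot f j) i)).card ≤ k - 2 := by
    have step : ∀ j : ZMod k, ((Finset.Icc 2 (k-1)).filter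
        (fun i => u ∈ Aset G k (goodRot f j) i)).card ≤
        ((if (m - 1 - j).val ∈ Finset.Icc 3 (k-3) then 1 else 0) +
         (if j = m-3 then 1 else 0)) +
        ((if j = m-2 then 1 else 0) + (if j = m+1 then 1 else 0)) := by
      intro j
      calc _ ≤ (T j).card := Finset.card_le_card (hsub j)
        _ ≤ _ := by
            apply (Finset.card_union_le _ _).trans
            gcongr <;> (apply (Finset.card_union_le _ _).trans; gcongr <;> (split <;> simp))
    calc ∑ j : ZMod k, ((Finset.Icc 2 (k-1)).filter
          (fun i => u ∈ Aset G k (goodRot f j) i)).card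
        ≤ ∑ j : ZMod k, (((if (m - 1 - j).val ∈ Finset.Icc 3 (k-3) then 1 else 0) +
            (if j = m-3 then 1 else 0)) +
           ((if j = m-2 then 1 else 0) + (if j = m+1 then 1 else 0))) :=
          Finset.sum_le_sum (fun j _ => step j)
      _ = ((∑ j : ZMod k, if (m - 1 - j).val ∈ Finset.Icc 3 (k-3) then 1 else 0) +
            (∑ j : ZMod k, if j = m-3 then 1 else 0)) +
          ((∑ j : ZMod k, if j = m-2 then 1 else 0) +
            (∑ j : ZMod k, if j = m+1 then 1 else 0)) := by
          rw [Finset.sum_add_distrib, Finset.sum_add_distrib, Finset.sum_add_distrib]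
      _ ≤ ((k - 5) + 1) + (1 + 1) := by
          have hsingle : ∀ c : ZMod k, (∑ j : ZMod k, if j = c then 1 else 0) = 1 := by
            intro c
            rw [Finset.sum_ite_eq' Finset.univ c (fun _ => 1), if_pos (Finset.mem_univ c)]
          gcongr
          · exact sum_path_indicator hk (m - 1)
          · exact le_of_eq (hsingle _)
          · exact le_of_eq (hsingle _)
          · exact le_of_eq (hsingle _)
      _ ≤ k - 2 := by omega
  omega
end PerVertex3

section Combine
open scoped Classical
variable {V : Type*} {G : SimpleGraph V} {k : ℕ}

lemma per_vertex [NeZero k] (hG : NoShortOddCycle G k) (hodd : Odd k) (hk : 7 ≤ k)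
    (f : ZMod k → V) (hf : ∀ i, G.Adj (f i) (f (i+1))) (u : V) :
    (∑ j : ZMod k, if G.Adj (f j) u then 1 else 0) +
      2 * ∑ j : ZMod k, ((Finset.Icc 2 (k-1)).filter
        (fun i => u ∈ Aset G k (goodRot f j) i)).card ≤ 2 * (k - 1) := by
  by_cases hA : ∃ m, G.Adj u (f m)
  · obtain ⟨m0, hm0⟩ := hA
    by_cases hB : ∃ m', G.Adj u (f m') ∧ m' ≠ m0
    · obtain ⟨m1, hm1, hne⟩ := hB
      have hsix : (6 : ZMod k) ≠ 0 := zm_ne hk (a := 6) (b := 0) (by omega) (by omega)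
        (by omega) (by norm_cast) (by norm_cast)
      have hcl := path2_classify hG hodd hk f hf (a := m0) (b := m1) hm0.symm hm1 (Ne.symm hne)
      -- find the "center" m with neighbors m-1, m+1
      have hcenter : ∃ m : ZMod k, G.Adj u (f (m-1)) ∧ G.Adj u (f (m+1)) := by
        rcases hcl with h | h
        · exact ⟨m0 + 1, by rw [add_sub_cancel_right]; exact hm0,
            by rw [show m0 + 1 + 1 = m0 + 2 by ring, ← h]; exact hm1⟩
        · exact ⟨m1 + 1, by rw [add_sub_cancel_right]; exact hm1,
            by rw [show m1 + 1 + 1 = m1 + 2 by ring, ← h]; exact hm0⟩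
      obtain ⟨m, h0a, h0b⟩ := hcenter
      refine case2 hG hodd hk f hf u m h0a h0b ?_
      intro m' hm'
      by_cases e1 : m' = m - 1
      · exact Or.inl e1
      by_cases e2 : m' = m + 1
      · exact Or.inr e2
      exfalso
      have hx := path2_classify hG hodd hk f hf (a := m') (b := m-1) hm'.symm h0a e1
      have hy := path2_classify hG hodd hk f hf (a := m') (b := m+1) hm'.symm h0b e2
      have hx' : m' = m - 3 := by
        rcases hx with h | h
        · linear_combination -h
        · exact absurd (by linear_combination h : m' = m + 1) e2
      have hy' : m' = m + 3 := by
        rcases hy with h | h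
        · exact absurd (by linear_combination -h : m' = m - 1) e1
        · linear_combination h
      rw [hx'] at hy'
      exact hsix (by linear_combination -hy')
    · push_neg at hB
      exact case1 hG hodd hk f hf u m0 hm0 (fun m' h => hB m' h)
  · push_neg at hA
    exact case0 hG hodd hk f hf u hA
end Combine


theorem sum_of_contributions_le {V : Type*} [Fintype V] (k : ℕ) (hodd : Odd k)
    (hk : 7 ≤ k) (G : SimpleGraph V) (hG : NoShortOddCycle G k)
    (f : ZMod k → V) (hf : IsCycleMap G f) :
    ∑ j ∈ Finset.range k,
        ((Nat.card ↥(Aset G k (goodRot f (j : ZMod k)) 1) : ℝ) / 2 +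
          ∑ i ∈ Finset.Icc 2 (k - 1),
            (Nat.card ↥(Aset G k (goodRot f (j : ZMod k)) i) : ℝ)) ≤
      (Fintype.card V : ℝ) * ((k : ℝ) - 1) := by
  classical
  haveI : NeZero k := ⟨by omega⟩
  obtain ⟨hfinj, hfadj⟩ := hf
  have hcard : ∀ (j : ZMod k) (i : ℕ),
      (Nat.card ↥(Aset G k (goodRot f j) i) : ℝ) =
        ∑ u : V, (if u ∈ Aset G k (goodRot f j) i then (1:ℝ) else 0) := by
    intro j i
    rw [Nat.card_eq_fintype_card, Fintype.card_subtype, Finset.card_filter]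
    push_cast
    rfl
  have hreindex : ∀ (F : ZMod k → ℝ), ∑ j ∈ Finset.range k, F ((j:ℕ) : ZMod k) = ∑ j : ZMod k, F j := by
    intro F
    refine Finset.sum_nbij' (fun (a:ℕ) => (a : ZMod k)) (fun (x:ZMod k) => x.val)
      ?_ ?_ ?_ ?_ ?_
    · intro a _; exact Finset.mem_univ _
    · intro x _; rw [Finset.mem_range]; exact ZMod.val_lt x
    · intro a ha; rw [Finset.mem_range] at ha; exact ZMod.val_cast_of_lt ha
    · intro x _; exact ZMod.natCast_rightInverse x
    · intro a _; rfl
  have key : ∀ u : V,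
      (∑ j : ZMod k, if G.Adj (f j) u then (1:ℝ) else 0)/2 +
      ∑ j : ZMod k, (((Finset.Icc 2 (k-1)).filter
        (fun i => u ∈ Aset G k (goodRot f j) i)).card : ℝ) ≤ (k:ℝ) - 1 := by
    intro u
    have hP := per_vertex hG hodd hk f hfadj u
    have e1 : (∑ j : ZMod k, if G.Adj (f j) u then (1:ℝ) else 0)
        = (((∑ j : ZMod k, if G.Adj (f j) u then 1 else 0 : ℕ)) : ℝ) := by
      push_cast; rfl
    have e2 : (∑ j : ZMod k, (((Finset.Icc 2 (k-1)).filter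
          (fun i => u ∈ Aset G k (goodRot f j) i)).card : ℝ))
        = (((∑ j : ZMod k, ((Finset.Icc 2 (k-1)).filter
          (fun i => u ∈ Aset G k (goodRot f j) i)).card : ℕ)) : ℝ) := by
      push_cast; rfl
    rw [e1, e2]
    have hcast := (Nat.cast_le (α := ℝ)).mpr hP
    push_cast [Nat.cast_sub (by omega : 1 ≤ k)] at hcast
    linarith
  calc ∑ j ∈ Finset.range k,
        ((Nat.card ↥(Aset G k (goodRot f (j : ZMod k)) 1) : ℝ) / 2 +
          ∑ i ∈ Finset.Icc 2 (k - 1),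
            (Nat.card ↥(Aset G k (goodRot f (j : ZMod k)) i) : ℝ))
      = ∑ j : ZMod k, ((Nat.card ↥(Aset G k (goodRot f j) 1) : ℝ) / 2 +
          ∑ i ∈ Finset.Icc 2 (k - 1), (Nat.card ↥(Aset G k (goodRot f j) i) : ℝ)) :=
        hreindex (fun j => ((Nat.card ↥(Aset G k (goodRot f j) 1) : ℝ)/2 +
          ∑ i ∈ Finset.Icc 2 (k - 1), (Nat.card ↥(Aset G k (goodRot f j) i) : ℝ)))
    _ = ∑ j : ZMod k, ∑ u : V, ((if G.Adj (f j) u then (1:ℝ) else 0)/2 +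
          (((Finset.Icc 2 (k-1)).filter (fun i => u ∈ Aset G k (goodRot f j) i)).card : ℝ)) := by
        apply Finset.sum_congr rfl
        intro j _
        rw [hcard j 1]
        have hone : ∀ u:V, (if u ∈ Aset G k (goodRot f j) 1 then (1:ℝ) else 0)
            = (if G.Adj (f j) u then (1:ℝ) else 0) := fun u => by
          simp only [memA1 hk f j u]
        rw [Finset.sum_congr rfl (fun u _ => hone u), Finset.sum_div]
        have h2 : ∑ i ∈ Finset.Icc 2 (k-1), (Nat.card ↥(Aset G k (goodRot f j) i) : ℝ)
            = ∑ u : V, (((Finset.Icc 2 (k-1)).filter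
              (fun i => u ∈ Aset G k (goodRot f j) i)).card : ℝ) := by
          rw [Finset.sum_congr rfl (fun i _ => hcard j i), Finset.sum_comm]
          apply Finset.sum_congr rfl
          intro u _
          rw [Finset.card_filter]
          push_cast
          rfl
        rw [h2, ← Finset.sum_add_distrib]
    _ = ∑ u : V, ∑ j : ZMod k, ((if G.Adj (f j) u then (1:ℝ) else 0)/2 +
          (((Finset.Icc 2 (k-1)).filter (fun i => u ∈ Aset G k (goodRot f j) i)).card : ℝ)) :=
        Finset.sum_comm
    _ = ∑ u : V, ((∑ j : ZMod k, if G.Adj (f j) u then (1:ℝ) else 0)/2 +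
          ∑ j : ZMod k, (((Finset.Icc 2 (k-1)).filter
            (fun i => u ∈ Aset G k (goodRot f j) i)).card : ℝ)) := by
        apply Finset.sum_congr rfl
        intro u _
        rw [Finset.sum_add_distrib, ← Finset.sum_div]
    _ ≤ ∑ _u : V, ((k:ℝ) - 1) := Finset.sum_le_sum (fun u _ => key u)
    _ = (Fintype.card V : ℝ) * ((k:ℝ) - 1) := by
        rw [Finset.sum_const, Finset.card_univ, nsmul_eq_mul]
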